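/- Let 𝒜 ∈ ℝ^{n₁×⋯×n_d} be nonzero. The output of Algorithm C (sequential truncated leading singular vectors of the unfoldings A_j) satisfies 𝒜(x₁⁰,…,x_d⁰) ≥ √(∏ⱼ rⱼ/∏ⱼ nⱼ) · λ_max(A₁) / √(∏_{j=2}^{d−1} n_j) ≥ √(∏ⱼ rⱼ/∏ⱼ nⱼ) · v_opt / √(∏_{j=2}^{d−1} n_j). -/

import Mathlib

open Finset

noncomputable def enorm' {ι : Type*} [Fintype ι] (x : ι → ℝ) : ℝ :=
  Real.sqrt (∑ i, x i ^ 2)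

def dot {ι : Type*} [Fintype ι] (x y : ι → ℝ) : ℝ := ∑ i, x i * y i

noncomputable def l0 {ι : Type*} [Fintype ι] (x : ι → ℝ) : ℕ :=
  (Finset.univ.filter fun i => x i ≠ 0).card

def IsTrunc {ι : Type*} [Fintype ι] [DecidableEq ι] (a : ι → ℝ) (r : ℕ) (ar : ι → ℝ) : Prop :=
  ∃ S : Finset ι, S.card = r ∧ (∀ i ∈ S, ar i = a i) ∧ (∀ i ∉ S, ar i = 0) ∧
    ∀ i ∈ S, ∀ j ∉ S, |a j| ≤ |a i|

noncomputable def lmax {m n' : Type*} [Fintype m] [Fintype n'] (A : Matrix m n' ℝ) : ℝ :=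
  sSup {c | ∃ x : n' → ℝ, enorm' x = 1 ∧ c = enorm' (A.mulVec x)}

noncomputable def fnorm {m n' : Type*} [Fintype m] [Fintype n'] (A : Matrix m n' ℝ) : ℝ :=
  Real.sqrt (∑ i, ∑ j, A i j ^ 2)

def tri {n1 n2 n3 : ℕ} (A : Fin n1 → Fin n2 → Fin n3 → ℝ)
    (x : Fin n1 → ℝ) (y : Fin n2 → ℝ) (z : Fin n3 → ℝ) : ℝ :=
  ∑ i, ∑ j, ∑ k, A i j k * x i * y j * z k

def mlin {d : ℕ} {n : Fin d → ℕ} (A : (∀ j, Fin (n j)) → ℝ)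
    (x : ∀ j, Fin (n j) → ℝ) : ℝ :=
  ∑ i, A i * ∏ j, x j (i j)

/-- Unfolding A_j of Algorithm C (cf. Remark 3.1): rows indexed by mode j,
columns by the modes k > j, with the modes k < j contracted against x_k. -/
def unf {d : ℕ} {n : Fin d → ℕ} (A : (∀ k, Fin (n k)) → ℝ)
    (x : ∀ k, Fin (n k) → ℝ) (j : Fin d) :
    Matrix (Fin (n j)) (∀ k : {k : Fin d // j < k}, Fin (n k.1)) ℝ :=
  fun t q => ∑ i : ∀ k, Fin (n k), A i * ∏ k,
    (if k < j then x k (i k)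
     else if h : j < k then (if i k = q ⟨k, h⟩ then (1 : ℝ) else 0)
     else (if (⟨k, i k⟩ : Σ m : Fin d, Fin (n m)) = ⟨j, t⟩ then 1 else 0))

/-- Contraction of 𝒜 with x_k on every mode except j; at the final stage
j = d this equals A_{d-1}ᵀ x_{d-1}⁰. -/
def cvec {d : ℕ} {n : Fin d → ℕ} (A : (∀ k, Fin (n k)) → ℝ)
    (x : ∀ k, Fin (n k) → ℝ) (j : Fin d) : Fin (n j) → ℝ :=
  fun t => ∑ i : ∀ k, Fin (n k), A i * ∏ k,
    (if k = j then (if (⟨k, i k⟩ : Σ m : Fin d, Fin (n m)) = ⟨j, t⟩ then (1 : ℝ) else 0)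
     else x k (i k))

section Basics
variable {ι : Type*} [Fintype ι]

lemma enorm_nonneg' (x : ι → ℝ) : 0 ≤ enorm' x := Real.sqrt_nonneg _

lemma sq_enorm (x : ι → ℝ) : enorm' x ^ 2 = ∑ i, x i ^ 2 :=
  Real.sq_sqrt (by positivity)

lemma enorm_eq_zero_iff (x : ι → ℝ) : enorm' x = 0 ↔ x = 0 := by
  constructor
  · intro h
    have h2 : ∑ i, x i ^ 2 = 0 := by
      have := congrArg (· ^ 2) h
      simpa [sq_enorm] using this
    funext i
    have := (Finset.sum_eq_zero_iff_of_nonneg (fun i _ => sq_nonneg (x i))).1 h2 i (mem_univ i)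
    exact pow_eq_zero_iff (by norm_num) |>.1 this
  · rintro rfl; simp [enorm']

lemma dot_self (x : ι → ℝ) : dot x x = enorm' x ^ 2 := by
  rw [sq_enorm]; simp [dot, sq]

lemma dot_le_enorm_mul_enorm (x y : ι → ℝ) : dot x y ≤ enorm' x * enorm' y := by
  have h := Finset.sum_mul_sq_le_sq_mul_sq Finset.univ x y
  have h2 : dot x y ≤ |dot x y| := le_abs_self _
  refine h2.trans ?_
  rw [← Real.sqrt_sq_eq_abs, enorm', enorm', ← Real.sqrt_mul (by positivity)]
  exact Real.sqrt_le_sqrt (by simpa [dot, sq] using h)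

lemma enorm'_smul (c : ℝ) (x : ι → ℝ) : enorm' (fun i => c * x i) = |c| * enorm' x := by
  simp only [enorm', mul_pow, ← Finset.mul_sum]
  rw [Real.sqrt_mul (sq_nonneg c), Real.sqrt_sq_eq_abs]


section Trunc
variable {ι : Type*} [Fintype ι] [DecidableEq ι]

lemma trunc_dot {a t : ι → ℝ} {r : ℕ} (h : IsTrunc a r t) : dot a t = enorm' t ^ 2 := by
  obtain ⟨S, hcard, hon, hoff, hmax⟩ := h
  rw [sq_enorm, dot]
  apply Finset.sum_congr rfl
  intro i _
  by_cases hi : i ∈ S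
  · rw [hon i hi]; ring
  · rw [hoff i hi]; ring

lemma trunc_sq_ge {a t : ι → ℝ} {r : ℕ} (h : IsTrunc a r t) (hr : 1 ≤ r) :
    (r : ℝ) / (Fintype.card ι) * enorm' a ^ 2 ≤ enorm' t ^ 2 := by
  obtain ⟨S, hcard, hon, hoff, hmax⟩ := h
  have hST : enorm' t ^ 2 = ∑ i ∈ S, a i ^ 2 := by
    rw [sq_enorm]
    rw [← Finset.sum_subset (Finset.subset_univ S) (fun i _ hi => by rw [hoff i hi]; ring)]
    exact Finset.sum_congr rfl fun i hi => by rw [hon i hi]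
  have hSne : S.Nonempty := Finset.card_pos.1 (hcard ▸ hr)
  obtain ⟨i0, hi0, hmin⟩ := Finset.exists_min_image S (fun i => a i ^ 2) hSne
  have hn : (r : ℕ) ≤ Fintype.card ι := hcard ▸ Finset.card_le_univ S
  have hnpos : (0:ℝ) < Fintype.card ι := by
    have : 0 < Fintype.card ι := lt_of_lt_of_le hr hn
    exact_mod_cast this
  rw [hST, sq_enorm, div_mul_eq_mul_div, div_le_iff₀ hnpos]
  have h1 : ∑ i ∈ Sᶜ, a i ^ 2 ≤ (Fintype.card ι - r : ℝ) * a i0 ^ 2 := by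
    have : ∑ i ∈ Sᶜ, a i ^ 2 ≤ Sᶜ.card • a i0 ^ 2 := by
      apply Finset.sum_le_card_nsmul
      intro j hj
      have := hmax i0 hi0 j (Finset.mem_compl.1 hj)
      calc a j ^ 2 = |a j| ^ 2 := (sq_abs _).symm
        _ ≤ |a i0| ^ 2 := pow_le_pow_left₀ (abs_nonneg _) this 2
        _ = a i0 ^ 2 := sq_abs _
    have hc : (Sᶜ.card : ℝ) = (Fintype.card ι - r : ℝ) := by
      rw [Finset.card_compl, hcard, Nat.cast_sub hn]
    rw [nsmul_eq_mul, hc] at this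
    exact this
  have h2 : (r:ℝ) * a i0 ^ 2 ≤ ∑ i ∈ S, a i ^ 2 := by
    have : S.card • a i0 ^ 2 ≤ ∑ i ∈ S, a i ^ 2 := Finset.card_nsmul_le_sum S _ _ hmin
    rw [hcard, nsmul_eq_mul] at this
    exact this
  have hsplit : ∑ i, a i ^ 2 = ∑ i ∈ S, a i ^ 2 + ∑ i ∈ Sᶜ, a i ^ 2 :=
    (Finset.sum_add_sum_compl S _).symm
  have hr' : (1:ℝ) ≤ r := by exact_mod_cast hr
  have hnr : (0:ℝ) ≤ (Fintype.card ι : ℝ) - r := by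
    have : (r:ℝ) ≤ Fintype.card ι := by exact_mod_cast hn
    linarith
  have h3 := mul_le_mul_of_nonneg_left h2 hnr
  have h4 := mul_le_mul_of_nonneg_left h1 (by positivity : (0:ℝ) ≤ (r:ℝ))
  nlinarith

lemma trunc_dot_norm {a t : ι → ℝ} {r : ℕ} (h : IsTrunc a r t) :
    dot a (fun s => t s / enorm' t) = enorm' t := by
  by_cases h0 : enorm' t = 0
  · have ht : t = 0 := by
      funext i
      have h2 : ∑ i, t i ^ 2 = 0 := by
        have := congrArg (· ^ 2) h0
        simpa [sq_enorm] using this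
      have := (Finset.sum_eq_zero_iff_of_nonneg (fun i _ => sq_nonneg (t i))).1 h2 i (mem_univ i)
      exact pow_eq_zero_iff (by norm_num) |>.1 this
    simp [dot, ht, h0, enorm']
  · have : dot a (fun s => t s / enorm' t) = dot a t / enorm' t := by
      simp [dot, Finset.sum_div, mul_div_assoc]
    rw [this, trunc_dot h, sq, mul_div_assoc, div_self h0, mul_one]

end Trunc
end Basics


section Mat
variable {m n' : Type*} [Fintype m] [Fintype n'] (A : Matrix m n' ℝ)

lemma enorm_mulVec_le_fnorm (v : n' → ℝ) : enorm' (A.mulVec v) ≤ fnorm A * enorm' v := by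
  rw [enorm', fnorm, enorm', ← Real.sqrt_mul (by positivity)]
  apply Real.sqrt_le_sqrt
  rw [Finset.sum_mul]
  apply Finset.sum_le_sum
  intro i _
  have := Finset.sum_mul_sq_le_sq_mul_sq Finset.univ (A i) v
  simpa [Matrix.mulVec, dotProduct, sq] using this

lemma lmax_bddAbove : BddAbove {c | ∃ x : n' → ℝ, enorm' x = 1 ∧ c = enorm' (A.mulVec x)} := by
  refine ⟨fnorm A, ?_⟩
  rintro c ⟨x, hx, rfl⟩
  simpa [hx] using enorm_mulVec_le_fnorm A x

lemma lmax_set_nonempty [Nonempty n'] :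
    {c | ∃ x : n' → ℝ, enorm' x = 1 ∧ c = enorm' (A.mulVec x)}.Nonempty := by
  classical
  obtain ⟨i0⟩ := ‹Nonempty n'›
  refine ⟨_, (fun j => if j = i0 then (1:ℝ) else 0), ?_, rfl⟩
  simp [enorm', Finset.sum_ite_eq', apply_ite (· ^ 2)]

lemma le_lmax [Nonempty n'] (v : n' → ℝ) (hv : enorm' v = 1) : enorm' (A.mulVec v) ≤ lmax A :=
  le_csSup (lmax_bddAbove A) ⟨v, hv, rfl⟩

lemma lmax_nonneg [Nonempty n'] : 0 ≤ lmax A := by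
  classical
  obtain ⟨c, x, hx, rfl⟩ := lmax_set_nonempty A
  exact (enorm_nonneg' _).trans (le_lmax A x hx)

lemma enorm_mulVec_le [Nonempty n'] (v : n' → ℝ) :
    enorm' (A.mulVec v) ≤ lmax A * enorm' v := by
  by_cases h0 : enorm' v = 0
  · have hv : v = 0 := by
      funext i
      have h2 : ∑ i, v i ^ 2 = 0 := by
        have := congrArg (· ^ 2) h0; simpa [sq_enorm] using this
      have := (Finset.sum_eq_zero_iff_of_nonneg (fun i _ => sq_nonneg (v i))).1 h2 i (mem_univ i)
      exact pow_eq_zero_iff (by norm_num) |>.1 this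
    simp [hv, h0, enorm', Matrix.mulVec_zero]
  · have hpos : 0 < enorm' v := lt_of_le_of_ne (enorm_nonneg' v) (Ne.symm h0)
    have hu : enorm' (fun i => (enorm' v)⁻¹ * v i) = 1 := by
      rw [enorm'_smul, abs_of_pos (by positivity), inv_mul_cancel₀ h0]
    have := le_lmax A _ hu
    have heq : A.mulVec (fun i => (enorm' v)⁻¹ * v i) = fun i => (enorm' v)⁻¹ * A.mulVec v i := by
      funext i
      simp only [Matrix.mulVec, dotProduct, Finset.mul_sum]
      exact Finset.sum_congr rfl fun j _ => by ring
    rw [heq, enorm'_smul, abs_of_pos (by positivity)] at this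
    calc enorm' (A.mulVec v) = enorm' v * ((enorm' v)⁻¹ * enorm' (A.mulVec v)) := by
          field_simp
      _ ≤ enorm' v * lmax A := by
          apply mul_le_mul_of_nonneg_left this (le_of_lt hpos)
      _ = lmax A * enorm' v := mul_comm _ _

lemma dot_transpose_mulVec (x : m → ℝ) (w : n' → ℝ) :
    dot (A.transpose.mulVec x) w = dot x (A.mulVec w) := by
  simp only [dot, Matrix.mulVec, dotProduct, Matrix.transpose_apply, Finset.sum_mul,
    Finset.mul_sum]
  rw [Finset.sum_comm]
  apply Finset.sum_congr rfl; intro i _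
  apply Finset.sum_congr rfl; intro j _
  ring

lemma fnorm_le_lmax [Nonempty n'] :
    fnorm A ≤ Real.sqrt (Fintype.card m) * lmax A := by
  have hrow : ∀ i, ∑ j, A i j ^ 2 ≤ lmax A ^ 2 := by
    intro i
    set ρ := enorm' (A i) with hρ
    have hρ2 : ρ ^ 2 = ∑ j, A i j ^ 2 := sq_enorm _
    by_cases h0 : ρ = 0
    · rw [← hρ2, h0]
      simpa using sq_nonneg (lmax A)
    · have hpos : 0 < ρ := lt_of_le_of_ne (enorm_nonneg' _) (Ne.symm h0)
      set v : n' → ℝ := fun j => ρ⁻¹ * A i j with hv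
      have hv1 : enorm' v = 1 := by
        rw [hv, enorm'_smul, abs_of_pos (by positivity), inv_mul_cancel₀ h0]
      have hAvi : A.mulVec v i = ρ := by
        simp only [Matrix.mulVec, dotProduct, hv]
        have : ∀ j : n', A i j * (ρ⁻¹ * A i j) = ρ⁻¹ * A i j ^ 2 := fun j => by ring
        rw [Finset.sum_congr rfl fun j _ => this j, ← Finset.mul_sum, ← hρ2]
        field_simp [sq]
      have h1 : ρ ≤ enorm' (A.mulVec v) := by
        rw [← Real.sqrt_sq hpos.le, enorm']
        apply Real.sqrt_le_sqrt
        calc ρ ^ 2 = A.mulVec v i ^ 2 := by rw [hAvi]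
          _ ≤ ∑ i', A.mulVec v i' ^ 2 :=
            Finset.single_le_sum (f := fun i' => A.mulVec v i' ^ 2)
              (fun i' _ => sq_nonneg _) (mem_univ i)
      have h2 := le_lmax A v hv1
      rw [← hρ2]
      have : ρ ≤ lmax A := h1.trans h2
      exact pow_le_pow_left₀ hpos.le this 2
  rw [fnorm, ← Real.sqrt_sq (lmax_nonneg A), ← Real.sqrt_mul (by positivity)]
  apply Real.sqrt_le_sqrt
  calc ∑ i, ∑ j, A i j ^ 2 ≤ ∑ _i : m, lmax A ^ 2 := Finset.sum_le_sum fun i _ => hrow i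
    _ = Fintype.card m * lmax A ^ 2 := by rw [Finset.sum_const, nsmul_eq_mul, Fintype.card]

end Mat


section Tens
variable {d : ℕ} {n : Fin d → ℕ} (A : (∀ k, Fin (n k)) → ℝ) (x : ∀ k, Fin (n k) → ℝ)

lemma dot_cvec (j : Fin d) : dot (cvec A x j) (x j) = mlin A x := by
  classical
  simp only [dot, cvec, mlin, Finset.sum_mul]
  rw [Finset.sum_comm]
  apply Finset.sum_congr rfl
  intro i _
  have key : ∀ t : Fin (n j),
      (∏ k, (if k = j then (if (⟨k, i k⟩ : Σ m : Fin d, Fin (n m)) = ⟨j, t⟩ then (1 : ℝ) else 0)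
       else x k (i k)))
      = (if i j = t then (1:ℝ) else 0) * ∏ k ∈ Finset.univ.erase j, x k (i k) := by
    intro t
    rw [← Finset.mul_prod_erase Finset.univ _ (Finset.mem_univ j)]
    congr 1
    · simp
    · exact Finset.prod_congr rfl fun k hk => if_neg (Finset.mem_erase.1 hk).1
  calc ∑ t, A i * (∏ k, (if k = j then (if (⟨k, i k⟩ : Σ m : Fin d, Fin (n m)) = ⟨j, t⟩
          then (1 : ℝ) else 0) else x k (i k))) * x j t
      = ∑ t, A i * ((if i j = t then (1:ℝ) else 0) *
          ∏ k ∈ Finset.univ.erase j, x k (i k)) * x j t := by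
        apply Finset.sum_congr rfl; intro t _; rw [key t]
    _ = A i * (∏ k ∈ Finset.univ.erase j, x k (i k)) * x j (i j) := by
        rw [Finset.sum_eq_single (i j)]
        · simp
        · intro t _ ht; simp [Ne.symm ht]
        · intro h; exact absurd (Finset.mem_univ _) h
    _ = A i * ∏ k, x k (i k) := by
        rw [mul_assoc, mul_comm _ (x j (i j)), ← Finset.mul_prod_erase Finset.univ
          (fun k => x k (i k)) (Finset.mem_univ j)]


lemma step_entry (j j' : Fin d) (hj' : (j' : ℕ) = (j : ℕ) + 1) (hlt : j < j')
    (q : ∀ k : {k : Fin d // j < k}, Fin (n k.1)) :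
    (unf A x j).transpose.mulVec (x j) q
      = unf A x j' (q ⟨j', hlt⟩) (fun k => q ⟨k.1, hlt.trans k.2⟩) := by
  classical
  simp only [Matrix.mulVec, dotProduct, Matrix.transpose_apply, unf]
  have lhs_eq : ∀ s : Fin (n j),
      (∑ i : ∀ k, Fin (n k), A i * ∏ k,
        (if k < j then x k (i k)
         else if h : j < k then (if i k = q ⟨k, h⟩ then (1 : ℝ) else 0)
         else (if (⟨k, i k⟩ : Σ m : Fin d, Fin (n m)) = ⟨j, s⟩ then 1 else 0))) * x j s
      = ∑ i : ∀ k, Fin (n k), A i * ((∏ k,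
        (if k < j then x k (i k)
         else if h : j < k then (if i k = q ⟨k, h⟩ then (1 : ℝ) else 0)
         else (if (⟨k, i k⟩ : Σ m : Fin d, Fin (n m)) = ⟨j, s⟩ then 1 else 0))) * x j s) := by
    intro s
    rw [Finset.sum_mul]
    exact Finset.sum_congr rfl fun i _ => by ring
  rw [Finset.sum_congr rfl fun s _ => lhs_eq s, Finset.sum_comm]
  apply Finset.sum_congr rfl
  intro i _
  have hPs : ∀ s : Fin (n j),
      (∏ k, (if k < j then x k (i k)
         else if h : j < k then (if i k = q ⟨k, h⟩ then (1 : ℝ) else 0)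
         else (if (⟨k, i k⟩ : Σ m : Fin d, Fin (n m)) = ⟨j, s⟩ then 1 else 0)))
      = (if i j = s then (1:ℝ) else 0) * ∏ k ∈ Finset.univ.erase j,
        (if k < j then x k (i k)
         else if h : j < k then (if i k = q ⟨k, h⟩ then (1 : ℝ) else 0)
         else 0) := by
    intro s
    rw [← Finset.mul_prod_erase Finset.univ _ (Finset.mem_univ j)]
    congr 1
    · rw [if_neg (lt_irrefl j), dif_neg (lt_irrefl j)]
      simp
    · apply Finset.prod_congr rfl
      intro k hk
      have hkj : k ≠ j := (Finset.mem_erase.1 hk).1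
      rcases lt_trichotomy k j with h | h | h
      · rw [if_pos h, if_pos h]
      · exact absurd h hkj
      · rw [if_neg (not_lt.2 h.le), if_neg (not_lt.2 h.le), dif_pos h, dif_pos h]
  calc ∑ s, A i * ((∏ k,
        (if k < j then x k (i k)
         else if h : j < k then (if i k = q ⟨k, h⟩ then (1 : ℝ) else 0)
         else (if (⟨k, i k⟩ : Σ m : Fin d, Fin (n m)) = ⟨j, s⟩ then 1 else 0))) * x j s)
      = ∑ s, A i * (((if i j = s then (1:ℝ) else 0) * ∏ k ∈ Finset.univ.erase j,
        (if k < j then x k (i k)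
         else if h : j < k then (if i k = q ⟨k, h⟩ then (1 : ℝ) else 0)
         else 0)) * x j s) := by
        exact Finset.sum_congr rfl fun s _ => by rw [hPs s]
    _ = A i * ((∏ k ∈ Finset.univ.erase j,
        (if k < j then x k (i k)
         else if h : j < k then (if i k = q ⟨k, h⟩ then (1 : ℝ) else 0)
         else 0)) * x j (i j)) := by
        rw [← Finset.mul_sum]
        congr 1
        rw [Finset.sum_eq_single (i j)]
        · simp
        · intro s _ hs; simp [Ne.symm hs]
        · intro h; exact absurd (Finset.mem_univ _) h
    _ = A i * ∏ k, (if k < j' then x k (i k)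
         else if h : j' < k then (if i k = q ⟨k, hlt.trans h⟩ then (1 : ℝ) else 0)
         else (if (⟨k, i k⟩ : Σ m : Fin d, Fin (n m)) = ⟨j', q ⟨j', hlt⟩⟩ then 1 else 0)) := by
        congr 1
        rw [← Finset.mul_prod_erase Finset.univ _ (Finset.mem_univ j), if_pos hlt, mul_comm]
        congr 1
        apply Finset.prod_congr rfl
        intro k hk
        have hkj : k ≠ j := (Finset.mem_erase.1 hk).1
        rcases lt_trichotomy k j with h | h | h
        · rw [if_pos h, if_pos (h.trans hlt)]
        · exact absurd h hkj
        · rw [if_neg (not_lt.2 h.le), dif_pos h]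
          rcases eq_or_lt_of_le (show (j' : ℕ) ≤ (k : ℕ) by
            rw [hj']; exact Fin.lt_iff_val_lt_val.1 h) with h2 | h2
          · have hkj' : k = j' := Fin.ext h2.symm
            subst hkj'
            rw [if_neg (lt_irrefl k), dif_neg (lt_irrefl k)]
            simp
          · have hj'k : j' < k := Fin.lt_iff_val_lt_val.2 h2
            rw [if_neg (not_lt.2 hj'k.le), dif_pos hj'k]


def stepEquiv (n : Fin d → ℕ) (j j' : Fin d) (hj' : (j' : ℕ) = (j : ℕ) + 1) (hlt : j < j') :
    (∀ k : {k : Fin d // j < k}, Fin (n k.1)) ≃ (Fin (n j') × ∀ k : {k : Fin d // j' < k}, Fin (n k.1)) where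
  toFun q := (q ⟨j', hlt⟩, fun k => q ⟨k.1, hlt.trans k.2⟩)
  invFun p := fun k =>
    if h : j' < k.1 then p.2 ⟨k.1, h⟩
    else Fin.cast (congrArg n (Fin.ext (by
      have h1 : (j : ℕ) < (k.1 : ℕ) := Fin.lt_iff_val_lt_val.1 k.2
      have h2 : ¬ (j' : ℕ) < (k.1 : ℕ) := fun hc => h (Fin.lt_iff_val_lt_val.2 hc)
      omega) : j' = k.1)) p.1
  left_inv q := by
    funext k
    dsimp only
    by_cases h : j' < k.1
    · rw [dif_pos h]
    · rw [dif_neg h]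
      have hk : k.1 = j' := by
        apply Fin.ext
        have h1 : (j : ℕ) < (k.1 : ℕ) := Fin.lt_iff_val_lt_val.1 k.2
        have h2 : ¬ (j' : ℕ) < (k.1 : ℕ) := fun hc => h (Fin.lt_iff_val_lt_val.2 hc)
        omega
      have hk2 : k = ⟨j', hlt⟩ := Subtype.ext hk
      subst hk2
      apply Fin.ext
      simp
  right_inv p := by
    refine Prod.ext ?_ ?_
    · show (if h : j' < j' then _ else _) = _
      rw [dif_neg (lt_irrefl j')]
      exact Fin.ext rfl
    · funext k
      show (if h : j' < k.1 then _ else _) = _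
      rw [dif_pos k.2]

lemma enorm_step (A : (∀ k, Fin (n k)) → ℝ) (x : ∀ k, Fin (n k) → ℝ)
    (j j' : Fin d) (hj' : (j' : ℕ) = (j : ℕ) + 1) (hlt : j < j') :
    enorm' ((unf A x j).transpose.mulVec (x j)) = fnorm (unf A x j') := by
  rw [enorm', fnorm]
  congr 1
  rw [show (∑ t, ∑ q', unf A x j' t q' ^ 2)
      = ∑ p : Fin (n j') × (∀ k : {k : Fin d // j' < k}, Fin (n k.1)),
        unf A x j' p.1 p.2 ^ 2 from
      (Fintype.sum_prod_type (fun p : Fin (n j') × (∀ k : {k : Fin d // j' < k}, Fin (n k.1)) =>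
        unf A x j' p.1 p.2 ^ 2)).symm]
  exact Fintype.sum_equiv (stepEquiv n j j' hj' hlt) _ _
    (fun q => by rw [step_entry A x j j' hj' hlt q]; rfl)


lemma last_fin_eq {j j' k : Fin d} (hj' : (j' : ℕ) = (j : ℕ) + 1) (hj'd : (j' : ℕ) = d - 1)
    (h : j < k) : k = j' := by
  apply Fin.ext
  have h1 : (j : ℕ) < (k : ℕ) := Fin.lt_iff_val_lt_val.1 h
  have h2 : (k : ℕ) < d := k.2
  omega

lemma last_entry (A : (∀ k, Fin (n k)) → ℝ) (x : ∀ k, Fin (n k) → ℝ)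
    (j j' : Fin d) (hj' : (j' : ℕ) = (j : ℕ) + 1) (hj'd : (j' : ℕ) = d - 1) (hlt : j < j')
    (q : ∀ k : {k : Fin d // j < k}, Fin (n k.1)) :
    (unf A x j).transpose.mulVec (x j) q = cvec A x j' (q ⟨j', hlt⟩) := by
  classical
  simp only [Matrix.mulVec, dotProduct, Matrix.transpose_apply, unf, cvec]
  have lhs_eq : ∀ s : Fin (n j),
      (∑ i : ∀ k, Fin (n k), A i * ∏ k,
        (if k < j then x k (i k)
         else if h : j < k then (if i k = q ⟨k, h⟩ then (1 : ℝ) else 0)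
         else (if (⟨k, i k⟩ : Σ m : Fin d, Fin (n m)) = ⟨j, s⟩ then 1 else 0))) * x j s
      = ∑ i : ∀ k, Fin (n k), A i * ((∏ k,
        (if k < j then x k (i k)
         else if h : j < k then (if i k = q ⟨k, h⟩ then (1 : ℝ) else 0)
         else (if (⟨k, i k⟩ : Σ m : Fin d, Fin (n m)) = ⟨j, s⟩ then 1 else 0))) * x j s) := by
    intro s
    rw [Finset.sum_mul]
    exact Finset.sum_congr rfl fun i _ => by ring
  rw [Finset.sum_congr rfl fun s _ => lhs_eq s, Finset.sum_comm]
  apply Finset.sum_congr rfl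
  intro i _
  have hPs : ∀ s : Fin (n j),
      (∏ k, (if k < j then x k (i k)
         else if h : j < k then (if i k = q ⟨k, h⟩ then (1 : ℝ) else 0)
         else (if (⟨k, i k⟩ : Σ m : Fin d, Fin (n m)) = ⟨j, s⟩ then 1 else 0)))
      = (if i j = s then (1:ℝ) else 0) * ∏ k ∈ Finset.univ.erase j,
        (if k < j then x k (i k)
         else if h : j < k then (if i k = q ⟨k, h⟩ then (1 : ℝ) else 0)
         else 0) := by
    intro s
    rw [← Finset.mul_prod_erase Finset.univ _ (Finset.mem_univ j)]
    congr 1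
    · rw [if_neg (lt_irrefl j), dif_neg (lt_irrefl j)]
      simp
    · apply Finset.prod_congr rfl
      intro k hk
      have hkj : k ≠ j := (Finset.mem_erase.1 hk).1
      rcases lt_trichotomy k j with h | h | h
      · rw [if_pos h, if_pos h]
      · exact absurd h hkj
      · rw [if_neg (not_lt.2 h.le), if_neg (not_lt.2 h.le), dif_pos h, dif_pos h]
  calc ∑ s, A i * ((∏ k,
        (if k < j then x k (i k)
         else if h : j < k then (if i k = q ⟨k, h⟩ then (1 : ℝ) else 0)
         else (if (⟨k, i k⟩ : Σ m : Fin d, Fin (n m)) = ⟨j, s⟩ then 1 else 0))) * x j s)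
      = ∑ s, A i * (((if i j = s then (1:ℝ) else 0) * ∏ k ∈ Finset.univ.erase j,
        (if k < j then x k (i k)
         else if h : j < k then (if i k = q ⟨k, h⟩ then (1 : ℝ) else 0)
         else 0)) * x j s) := by
        exact Finset.sum_congr rfl fun s _ => by rw [hPs s]
    _ = A i * ((∏ k ∈ Finset.univ.erase j,
        (if k < j then x k (i k)
         else if h : j < k then (if i k = q ⟨k, h⟩ then (1 : ℝ) else 0)
         else 0)) * x j (i j)) := by
        rw [← Finset.mul_sum]
        congr 1
        rw [Finset.sum_eq_single (i j)]
        · simp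
        · intro s _ hs; simp [Ne.symm hs]
        · intro h; exact absurd (Finset.mem_univ _) h
    _ = A i * ∏ k, (if k = j' then
          (if (⟨k, i k⟩ : Σ m : Fin d, Fin (n m)) = ⟨j', q ⟨j', hlt⟩⟩ then (1:ℝ) else 0)
         else x k (i k)) := by
        congr 1
        rw [← Finset.mul_prod_erase Finset.univ _ (Finset.mem_univ j),
          if_neg (by intro h; rw [h] at hj'; omega : j ≠ j'), mul_comm]
        congr 1
        apply Finset.prod_congr rfl
        intro k hk
        have hkj : k ≠ j := (Finset.mem_erase.1 hk).1
        rcases lt_trichotomy k j with h | h | h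
        · have hne : k ≠ j' := by
            intro he; rw [he] at h; exact absurd (h.trans hlt) (lt_irrefl j')
          rw [if_pos h, if_neg hne]
        · exact absurd h hkj
        · have hk2 : k = j' := last_fin_eq hj' hj'd h
          subst hk2
          rw [if_neg (not_lt.2 h.le), dif_pos h, if_pos rfl]
          simp

def lastEquiv (n : Fin d → ℕ) (j j' : Fin d) (hj' : (j' : ℕ) = (j : ℕ) + 1)
    (hj'd : (j' : ℕ) = d - 1) (hlt : j < j') :
    (∀ k : {k : Fin d // j < k}, Fin (n k.1)) ≃ Fin (n j') where
  toFun q := q ⟨j', hlt⟩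
  invFun t := fun k => Fin.cast (congrArg n (last_fin_eq hj' hj'd k.2).symm) t
  left_inv q := by
    funext k
    dsimp only
    have hk2 : k = ⟨j', hlt⟩ := Subtype.ext (last_fin_eq hj' hj'd k.2)
    subst hk2
    apply Fin.ext
    simp
  right_inv t := by
    apply Fin.ext
    simp

lemma enorm_last (A : (∀ k, Fin (n k)) → ℝ) (x : ∀ k, Fin (n k) → ℝ)
    (j j' : Fin d) (hj' : (j' : ℕ) = (j : ℕ) + 1) (hj'd : (j' : ℕ) = d - 1) (hlt : j < j') :
    enorm' ((unf A x j).transpose.mulVec (x j)) = enorm' (cvec A x j') := by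
  rw [enorm', enorm']
  congr 1
  exact Fintype.sum_equiv (lastEquiv n j j' hj' hj'd hlt) _ _
    (fun q => by rw [last_entry A x j j' hj' hj'd hlt q]; rfl)


lemma sum_pi_indicator {K : Type*} [Fintype K] [DecidableEq K] {β : K → Type*}
    [∀ k, Fintype (β k)] [∀ k, DecidableEq (β k)] (g : ∀ k, β k) (z : (∀ k, β k) → ℝ) :
    ∑ q, (∏ k, if g k = q k then (1:ℝ) else 0) * z q = z g := by
  rw [Finset.sum_eq_single g]
  · simp
  · intro q _ hq
    obtain ⟨k, hk⟩ := Function.ne_iff.1 hq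
    have h0 : (if g k = q k then (1:ℝ) else 0) = 0 := if_neg (Ne.symm hk)
    rw [Finset.prod_eq_zero (Finset.mem_univ k) h0, zero_mul]
  · intro h; exact absurd (Finset.mem_univ _) h

lemma mem_erase_first_iff {first : Fin d} (hfirst : (first : ℕ) = 0) (k : Fin d) :
    k ∈ Finset.univ.erase first ↔ first < k := by
  simp only [Finset.mem_erase, Finset.mem_univ, and_true]
  constructor
  · intro hk
    apply Fin.lt_iff_val_lt_val.2
    have : (k : ℕ) ≠ 0 := fun h => hk (Fin.ext (by rw [h, hfirst]))
    omega
  · intro h he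
    rw [he] at h
    exact lt_irrefl _ h

lemma mlin_eq_dot_mulVec (A : (∀ k, Fin (n k)) → ℝ) (x : ∀ k, Fin (n k) → ℝ)
    (first : Fin d) (hfirst : (first : ℕ) = 0) (y : ∀ j, Fin (n j) → ℝ) :
    mlin A y = dot (y first)
      ((unf A x first).mulVec (fun q : ∀ k : {k : Fin d // first < k}, Fin (n k.1) =>
        ∏ k, y k.1 (q k))) := by
  classical
  have hnotlt : ∀ k : Fin d, ¬ k < first := fun k hk => by
    have := Fin.lt_iff_val_lt_val.1 hk; omega
  simp only [dot, Matrix.mulVec, dotProduct, unf, mlin]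
  have key : ∀ t : Fin (n first),
      (∑ q : ∀ k : {k : Fin d // first < k}, Fin (n k.1),
        (∑ i : ∀ k, Fin (n k), A i * ∏ k,
          (if k < first then x k (i k)
           else if h : first < k then (if i k = q ⟨k, h⟩ then (1 : ℝ) else 0)
           else (if (⟨k, i k⟩ : Σ m : Fin d, Fin (n m)) = ⟨first, t⟩ then 1 else 0)))
          * ∏ k : {k : Fin d // first < k}, y k.1 (q k))
      = ∑ i : ∀ k, Fin (n k), A i * ((if i first = t then (1:ℝ) else 0) *
          ∏ k : {k : Fin d // first < k}, y k.1 (i k.1)) := by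
    intro t
    have swap : ∀ q : ∀ k : {k : Fin d // first < k}, Fin (n k.1),
        (∑ i : ∀ k, Fin (n k), A i * ∏ k,
          (if k < first then x k (i k)
           else if h : first < k then (if i k = q ⟨k, h⟩ then (1 : ℝ) else 0)
           else (if (⟨k, i k⟩ : Σ m : Fin d, Fin (n m)) = ⟨first, t⟩ then 1 else 0)))
          * ∏ k : {k : Fin d // first < k}, y k.1 (q k)
        = ∑ i : ∀ k, Fin (n k), A i * ((if i first = t then (1:ℝ) else 0) *
            ((∏ k : {k : Fin d // first < k}, (if i k.1 = q k then (1:ℝ) else 0))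
              * ∏ k : {k : Fin d // first < k}, y k.1 (q k))) := by
      intro q
      rw [Finset.sum_mul]
      apply Finset.sum_congr rfl
      intro i _
      have hprod : (∏ k,
          (if k < first then x k (i k)
           else if h : first < k then (if i k = q ⟨k, h⟩ then (1 : ℝ) else 0)
           else (if (⟨k, i k⟩ : Σ m : Fin d, Fin (n m)) = ⟨first, t⟩ then 1 else 0)))
          = (if i first = t then (1:ℝ) else 0) *
            ∏ k : {k : Fin d // first < k}, (if i k.1 = q k then (1:ℝ) else 0) := by
        rw [← Finset.mul_prod_erase Finset.univ _ (Finset.mem_univ first)]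
        congr 1
        · rw [if_neg (hnotlt first), dif_neg (lt_irrefl first)]
          simp
        · calc ∏ k ∈ Finset.univ.erase first,
                (if k < first then x k (i k)
                 else if h : first < k then (if i k = q ⟨k, h⟩ then (1 : ℝ) else 0)
                 else (if (⟨k, i k⟩ : Σ m : Fin d, Fin (n m)) = ⟨first, t⟩ then 1 else 0))
              = ∏ k ∈ Finset.univ.erase first,
                (if h : first < k then (if i k = q ⟨k, h⟩ then (1:ℝ) else 0) else 0) := by
                apply Finset.prod_congr rfl
                intro k hk
                have h1 := (mem_erase_first_iff hfirst k).1 hk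
                rw [if_neg (hnotlt k), dif_pos h1, dif_pos h1]
            _ = ∏ k : {k : Fin d // first < k},
                (if h : first < k.1 then (if i k.1 = q ⟨k.1, h⟩ then (1:ℝ) else 0) else 0) :=
                Finset.prod_subtype (Finset.univ.erase first) (mem_erase_first_iff hfirst)
                  (fun k => if h : first < k then (if i k = q ⟨k, h⟩ then (1:ℝ) else 0) else 0)
            _ = ∏ k : {k : Fin d // first < k}, (if i k.1 = q k then (1:ℝ) else 0) :=
                Finset.prod_congr rfl fun k _ => by rw [dif_pos k.2]
      rw [hprod]; ring
    rw [Finset.sum_congr rfl fun q _ => swap q, Finset.sum_comm]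
    apply Finset.sum_congr rfl
    intro i _
    rw [← Finset.mul_sum, ← Finset.mul_sum]
    congr 2
    exact sum_pi_indicator (fun k : {k : Fin d // first < k} => i k.1)
      (fun q => ∏ k : {k : Fin d // first < k}, y k.1 (q k))
  have outer : ∀ t : Fin (n first),
      (∑ i : ∀ k, Fin (n k), A i * ((if i first = t then (1:ℝ) else 0) *
          ∏ k : {k : Fin d // first < k}, y k.1 (i k.1))) * y first t
      = ∑ i : ∀ k, Fin (n k), A i * (((if i first = t then (1:ℝ) else 0) *
          ∏ k : {k : Fin d // first < k}, y k.1 (i k.1)) * y first t) := by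
    intro t
    rw [Finset.sum_mul]
    exact Finset.sum_congr rfl fun i _ => by ring
  calc ∑ i : ∀ k, Fin (n k), A i * ∏ k, y k (i k)
      = ∑ i : ∀ k, Fin (n k),
          A i * ((∏ k : {k : Fin d // first < k}, y k.1 (i k.1)) * y first (i first)) := by
        apply Finset.sum_congr rfl
        intro i _
        congr 1
        rw [← Finset.mul_prod_erase Finset.univ (fun k => y k (i k)) (Finset.mem_univ first),
          ← Finset.prod_subtype (Finset.univ.erase first) (mem_erase_first_iff hfirst)
            (fun k => y k (i k))]
        ring
    _ = ∑ i : ∀ k, Fin (n k), ∑ t, A i * (((if i first = t then (1:ℝ) else 0) *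
          ∏ k : {k : Fin d // first < k}, y k.1 (i k.1)) * y first t) := by
        apply Finset.sum_congr rfl
        intro i _
        rw [Finset.sum_eq_single (i first)]
        · simp
        · intro t _ ht; simp [Ne.symm ht]
        · intro h; exact absurd (Finset.mem_univ _) h
    _ = ∑ t, (∑ i : ∀ k, Fin (n k), A i * ((if i first = t then (1:ℝ) else 0) *
          ∏ k : {k : Fin d // first < k}, y k.1 (i k.1))) * y first t := by
        rw [Finset.sum_comm]
        exact Finset.sum_congr rfl fun t _ => (outer t).symm
    _ = ∑ t, (∑ q : ∀ k : {k : Fin d // first < k}, Fin (n k.1),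
        (∑ i : ∀ k, Fin (n k), A i * ∏ k,
          (if k < first then x k (i k)
           else if h : first < k then (if i k = q ⟨k, h⟩ then (1 : ℝ) else 0)
           else (if (⟨k, i k⟩ : Σ m : Fin d, Fin (n m)) = ⟨first, t⟩ then 1 else 0)))
          * ∏ k : {k : Fin d // first < k}, y k.1 (q k)) * y first t := by
        exact Finset.sum_congr rfl fun t _ => by rw [key t]
  exact Finset.sum_congr rfl fun t _ => mul_comm _ _

end Tens

section MainProof
variable {d : ℕ} {n : Fin d → ℕ}

lemma prod_range_split (f : ℕ → ℝ) (m : ℕ) (hm : 0 < m) :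
    ∏ k ∈ Finset.range m, f k = (∏ k ∈ Finset.range (m-1), f k) * f (m-1) := by
  obtain ⟨e, rfl⟩ := Nat.exists_eq_succ_of_ne_zero hm.ne'
  simp [Finset.prod_range_succ]

lemma prod_range_split_bot (f : ℕ → ℝ) (m : ℕ) (hm : 0 < m) :
    ∏ k ∈ Finset.range m, f k = f 0 * ∏ k ∈ Finset.Ico 1 m, f k := by
  rw [Finset.range_eq_Ico, Finset.prod_eq_prod_Ico_succ_bot hm]

end MainProof

section Main
variable {d : ℕ} {n : Fin d → ℕ}

lemma pi_nonempty (hn : ∀ k : Fin d, 1 ≤ n k) (j : Fin d) :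
    Nonempty (∀ k : {k : Fin d // j < k}, Fin (n k.1)) :=
  ⟨fun k => ⟨0, hn k.1⟩⟩

lemma S1 (A : (∀ k, Fin (n k)) → ℝ) (x xb tt : ∀ j, Fin (n j) → ℝ)
    (hn : ∀ k : Fin d, 1 ≤ n k) (r : Fin d → ℕ) (hr1 : ∀ j, 1 ≤ r j) (j : Fin d)
    (wj : (∀ k : {k : Fin d // j < k}, Fin (n k.1)) → ℝ)
    (hxb : enorm' (xb j) = 1) (hw : enorm' wj = 1)
    (hAw : (unf A x j).mulVec wj = (fun s => lmax (unf A x j) * xb j s))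
    (htr : IsTrunc (xb j) (r j) (tt j)) (hxj : x j = fun s => tt j s / enorm' (tt j)) :
    Real.sqrt ((r j : ℝ) / (n j : ℝ)) * lmax (unf A x j)
      ≤ enorm' ((unf A x j).transpose.mulVec (x j)) := by
  haveI := pi_nonempty hn j
  set L := lmax (unf A x j) with hL
  have hL0 : 0 ≤ L := lmax_nonneg _
  have h1 : dot ((unf A x j).transpose.mulVec (x j)) wj = L * enorm' (tt j) := by
    rw [dot_transpose_mulVec, hAw]
    calc dot (x j) (fun s => L * xb j s) = L * dot (xb j) (x j) := by
          simp only [dot, Finset.mul_sum]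
          exact Finset.sum_congr rfl fun s _ => by ring
      _ = L * enorm' (tt j) := by rw [hxj, trunc_dot_norm htr]
  have h2 : Real.sqrt ((r j : ℝ) / (n j : ℝ)) ≤ enorm' (tt j) := by
    have h := trunc_sq_ge htr (hr1 j)
    rw [Fintype.card_fin, hxb] at h
    calc Real.sqrt ((r j:ℝ)/(n j:ℝ)) = Real.sqrt ((r j:ℝ)/(n j:ℝ) * 1 ^ 2) := by norm_num
      _ ≤ Real.sqrt (enorm' (tt j) ^ 2) := Real.sqrt_le_sqrt h
      _ = enorm' (tt j) := Real.sqrt_sq (enorm_nonneg' _)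
  have h3 : dot ((unf A x j).transpose.mulVec (x j)) wj
      ≤ enorm' ((unf A x j).transpose.mulVec (x j)) := by
    have h := dot_le_enorm_mul_enorm ((unf A x j).transpose.mulVec (x j)) wj
    rwa [hw, mul_one] at h
  calc Real.sqrt ((r j:ℝ)/(n j:ℝ)) * L ≤ enorm' (tt j) * L := mul_le_mul_of_nonneg_right h2 hL0
    _ = L * enorm' (tt j) := mul_comm _ _
    _ ≤ _ := h1 ▸ h3

lemma S3 (A : (∀ k, Fin (n k)) → ℝ) (x tt : ∀ j, Fin (n j) → ℝ)
    (r : Fin d → ℕ) (j' : Fin d) (hr1 : 1 ≤ r j')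
    (htr : IsTrunc (cvec A x j') (r j') (tt j'))
    (hxl : x j' = fun s => tt j' s / enorm' (tt j')) :
    mlin A x = enorm' (tt j') ∧
      Real.sqrt ((r j' : ℝ) / (n j' : ℝ)) * enorm' (cvec A x j') ≤ enorm' (tt j') := by
  constructor
  · rw [← dot_cvec A x j', hxl]
    exact trunc_dot_norm htr
  · have h := trunc_sq_ge htr hr1
    rw [Fintype.card_fin] at h
    calc Real.sqrt ((r j':ℝ)/(n j':ℝ)) * enorm' (cvec A x j')
        = Real.sqrt ((r j':ℝ)/(n j':ℝ) * enorm' (cvec A x j') ^ 2) := by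
          rw [Real.sqrt_mul (by positivity), Real.sqrt_sq (enorm_nonneg' _)]
      _ ≤ Real.sqrt (enorm' (tt j') ^ 2) := Real.sqrt_le_sqrt h
      _ = enorm' (tt j') := Real.sqrt_sq (enorm_nonneg' _)

lemma enorm_tensor (hn : ∀ k : Fin d, 1 ≤ n k) (first : Fin d)
    (y : ∀ j, Fin (n j) → ℝ) (hy : ∀ j, enorm' (y j) = 1) :
    enorm' (fun q : ∀ k : {k : Fin d // first < k}, Fin (n k.1) => ∏ k, y k.1 (q k)) = 1 := by
  classical
  rw [enorm']
  have h : ∑ q : ∀ k : {k : Fin d // first < k}, Fin (n k.1), (∏ k, y k.1 (q k)) ^ 2 = 1 := by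
    have e1 : ∀ q : ∀ k : {k : Fin d // first < k}, Fin (n k.1),
        (∏ k, y k.1 (q k)) ^ 2 = ∏ k : {k : Fin d // first < k}, (y k.1 (q k)) ^ 2 :=
      fun q => by rw [← Finset.prod_pow]
    rw [Finset.sum_congr rfl fun q _ => e1 q, ← Fintype.prod_sum
      (fun (k : {k : Fin d // first < k}) (s : Fin (n k.1)) => (y k.1 s) ^ 2)]
    have e2 : ∀ k : {k : Fin d // first < k}, ∑ s, (y k.1 s) ^ 2 = 1 := by
      intro k
      rw [← sq_enorm, hy k.1, one_pow]
    rw [Finset.prod_congr rfl fun k _ => e2 k, Finset.prod_const_one]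
  rw [h, Real.sqrt_one]

lemma opt_le (A : (∀ k, Fin (n k)) → ℝ) (x : ∀ k, Fin (n k) → ℝ)
    (first : Fin d) (hfirst : (first : ℕ) = 0) (hn : ∀ k : Fin d, 1 ≤ n k)
    (y : ∀ j, Fin (n j) → ℝ) (hy : ∀ j, enorm' (y j) = 1) :
    mlin A y ≤ lmax (unf A x first) := by
  haveI := pi_nonempty hn first
  set z : (∀ k : {k : Fin d // first < k}, Fin (n k.1)) → ℝ :=
    fun q => ∏ k, y k.1 (q k) with hz
  have hz1 : enorm' z = 1 := enorm_tensor hn first y hy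
  calc mlin A y = dot (y first) ((unf A x first).mulVec z) :=
        mlin_eq_dot_mulVec A x first hfirst y
    _ ≤ enorm' (y first) * enorm' ((unf A x first).mulVec z) := dot_le_enorm_mul_enorm _ _
    _ ≤ 1 * (lmax (unf A x first) * 1) := by
        rw [hy first]
        apply mul_le_mul_of_nonneg_left _ zero_le_one
        have := enorm_mulVec_le (unf A x first) z
        rwa [hz1] at this
    _ = lmax (unf A x first) := by ring

end Main

/-- Theorem 3.4: approximation bound of Algorithm C (sequential truncated
leading singular vectors of the unfoldings). -/
theorem stmt_14 {d : ℕ} {n : Fin d → ℕ} (hd : 3 ≤ d)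
    (A : (∀ k, Fin (n k)) → ℝ) (hA : A ≠ 0)
    (r : Fin d → ℕ) (hr : ∀ j, 1 ≤ r j ∧ r j ≤ n j)
    (first last : Fin d) (hfirst : (first : ℕ) = 0) (hlast : (last : ℕ) = d - 1)
    (x xb : ∀ j, Fin (n j) → ℝ) (t : ∀ j, Fin (n j) → ℝ)
    (w : ∀ j, (∀ k : {k : Fin d // j < k}, Fin (n k.1)) → ℝ)
    -- steps 1-2: for j = 1,…,d-1, x_j⁰ is the normalized r_j-truncation of the
    -- leading left singular vector of A_j
    (hstep : ∀ j, j ≠ last →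
      enorm' (xb j) = 1 ∧ enorm' (w j) = 1 ∧
      (unf A x j).mulVec (w j) = (fun s => lmax (unf A x j) * xb j s) ∧
      (unf A x j).transpose.mulVec (xb j) = (fun q => lmax (unf A x j) * w j q) ∧
      IsTrunc (xb j) (r j) (t j) ∧ x j = fun s => t j s / enorm' (t j))
    -- step 3: x_d⁰ is the normalized r_d-truncation of A_{d-1}ᵀ x_{d-1}⁰
    (hlaststep : IsTrunc (cvec A x last) (r last) (t last) ∧
      x last = fun s => t last s / enorm' (t last)) :
    mlin A x ≥
        Real.sqrt ((∏ j, (r j : ℝ)) / ∏ j, (n j : ℝ)) *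
          (lmax (unf A x first) /
            Real.sqrt (∏ j ∈ (Finset.univ.erase first).erase last, (n j : ℝ))) ∧
      ∀ y : ∀ j, Fin (n j) → ℝ, (∀ j, enorm' (y j) = 1 ∧ l0 (y j) ≤ r j) →
        Real.sqrt ((∏ j, (r j : ℝ)) / ∏ j, (n j : ℝ)) *
          (mlin A y /
            Real.sqrt (∏ j ∈ (Finset.univ.erase first).erase last, (n j : ℝ))) ≤
          mlin A x := by
  classical
  obtain ⟨htrl, hxl⟩ := hlaststep
  have hn1 : ∀ j : Fin d, 1 ≤ n j := fun j => le_trans (hr j).1 (hr j).2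
  have hd0 : 0 < d := by omega
  set R : ℕ → ℝ := fun m => if h : m < d then (r ⟨m, h⟩ : ℝ) else 1 with hR
  set N : ℕ → ℝ := fun m => if h : m < d then (n ⟨m, h⟩ : ℝ) else 1 with hN
  have hR1 : ∀ m, 1 ≤ R m := by
    intro m; rw [hR]; dsimp only; split_ifs with h
    · exact_mod_cast (hr _).1
    · exact le_refl 1
  have hN1 : ∀ m, 1 ≤ N m := by
    intro m; rw [hN]; dsimp only; split_ifs with h
    · exact_mod_cast hn1 _
    · exact le_refl 1
  have hRpos : ∀ m, (0:ℝ) < R m := fun m => lt_of_lt_of_le one_pos (hR1 m)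
  have hNpos : ∀ m, (0:ℝ) < N m := fun m => lt_of_lt_of_le one_pos (hN1 m)
  haveI := pi_nonempty hn1 first
  have hL0nn : 0 ≤ lmax (unf A x first) := lmax_nonneg _
  -- the inductive chain
  have claim : ∀ m : ℕ, ∀ _hm : m ≤ d - 2,
      Real.sqrt (∏ k ∈ Finset.range (m+1), (R k / N k)) /
        Real.sqrt (∏ k ∈ Finset.Ico 1 (m+1), N k) * lmax (unf A x first)
      ≤ enorm' ((unf A x (⟨m, by omega⟩ : Fin d)).transpose.mulVec (x ⟨m, by omega⟩)) := by
    intro m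
    induction m with
    | zero =>
      intro hm
      have hf : (⟨0, by omega⟩ : Fin d) = first := Fin.ext (by simp [hfirst])
      have hne : first ≠ last := by
        intro h; rw [h] at hfirst; omega
      obtain ⟨hxb, hw, hAw, _, htr, hxj⟩ := hstep first hne
      have h1 := S1 A x xb t hn1 r (fun j => (hr j).1) first (w first) hxb hw hAw htr hxj
      rw [hf]
      have eR : R 0 = (r first : ℝ) := by
        rw [hR]; dsimp only; rw [dif_pos hd0]
        have : (⟨0, hd0⟩ : Fin d) = first := Fin.ext (by simp [hfirst])
        rw [this]
      have eN : N 0 = (n first : ℝ) := by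
        rw [hN]; dsimp only; rw [dif_pos hd0]
        have : (⟨0, hd0⟩ : Fin d) = first := Fin.ext (by simp [hfirst])
        rw [this]
      simp only [zero_add, Finset.prod_range_one, Finset.Ico_self, Finset.prod_empty,
        Real.sqrt_one, div_one, eR, eN]
      exact h1
    | succ p ih =>
      intro hm
      have IH := ih (by omega)
      have hjlt : p + 1 < d := by omega
      have hne : (⟨p+1, hjlt⟩ : Fin d) ≠ last := by
        intro h
        have := congrArg Fin.val h
        rw [hlast] at this
        simp only [Fin.val_mk] at this
        omega
      obtain ⟨hxb, hw, hAw, _, htr, hxj⟩ := hstep ⟨p+1, hjlt⟩ hne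
      have h1 := S1 A x xb t hn1 r (fun j => (hr j).1) ⟨p+1, hjlt⟩ (w ⟨p+1, hjlt⟩)
        hxb hw hAw htr hxj
      haveI := pi_nonempty hn1 (⟨p+1, hjlt⟩ : Fin d)
      have hLj : 0 ≤ lmax (unf A x ⟨p+1, hjlt⟩) := lmax_nonneg _
      have eN : N (p+1) = (n (⟨p+1, hjlt⟩ : Fin d) : ℝ) := by
        rw [hN]; dsimp only; rw [dif_pos hjlt]
      have h2 : enorm' ((unf A x (⟨p, by omega⟩ : Fin d)).transpose.mulVec (x ⟨p, by omega⟩))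
          ≤ Real.sqrt (N (p+1)) * lmax (unf A x ⟨p+1, hjlt⟩) := by
        rw [enorm_step A x ⟨p, by omega⟩ ⟨p+1, hjlt⟩ rfl
          (Fin.mk_lt_mk.2 (by omega))]
        have h := fnorm_le_lmax (unf A x (⟨p+1, hjlt⟩ : Fin d))
        rw [Fintype.card_fin] at h
        rw [eN]
        exact h
      have hb : (0:ℝ) < Real.sqrt (N (p+1)) := Real.sqrt_pos.2 (hNpos _)
      have ha : (0:ℝ) ≤ Real.sqrt (R (p+1) / N (p+1)) := Real.sqrt_nonneg _
      have key : Real.sqrt (∏ k ∈ Finset.range (p+1), (R k / N k)) /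
            Real.sqrt (∏ k ∈ Finset.Ico 1 (p+1), N k) * lmax (unf A x first)
          ≤ Real.sqrt (N (p+1)) * lmax (unf A x ⟨p+1, hjlt⟩) := le_trans IH h2
      have hprodRN : (0:ℝ) < ∏ k ∈ Finset.range (p+1), (R k / N k) :=
        Finset.prod_pos fun k _ => div_pos (hRpos k) (hNpos k)
      have hprodN : (0:ℝ) < ∏ k ∈ Finset.Ico 1 (p+1), N k :=
        Finset.prod_pos fun k _ => hNpos k
      have hc : Real.sqrt (∏ k ∈ Finset.range (p+1+1), (R k / N k)) /
            Real.sqrt (∏ k ∈ Finset.Ico 1 (p+1+1), N k)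
          = Real.sqrt (R (p+1) / N (p+1)) *
            (Real.sqrt (∏ k ∈ Finset.range (p+1), (R k / N k)) /
              Real.sqrt (∏ k ∈ Finset.Ico 1 (p+1), N k)) / Real.sqrt (N (p+1)) := by
        rw [Finset.prod_range_succ, Finset.prod_Ico_succ_top (by omega : 1 ≤ p+1),
          Real.sqrt_mul hprodRN.le, Real.sqrt_mul hprodN.le]
        ring
      rw [hc, div_mul_eq_mul_div, div_le_iff₀ hb]
      calc Real.sqrt (R (p+1) / N (p+1)) *
            (Real.sqrt (∏ k ∈ Finset.range (p+1), (R k / N k)) /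
              Real.sqrt (∏ k ∈ Finset.Ico 1 (p+1), N k)) * lmax (unf A x first)
          = Real.sqrt (R (p+1) / N (p+1)) *
            (Real.sqrt (∏ k ∈ Finset.range (p+1), (R k / N k)) /
              Real.sqrt (∏ k ∈ Finset.Ico 1 (p+1), N k) * lmax (unf A x first)) := by ring
        _ ≤ Real.sqrt (R (p+1) / N (p+1)) *
            (Real.sqrt (N (p+1)) * lmax (unf A x ⟨p+1, hjlt⟩)) :=
            mul_le_mul_of_nonneg_left key ha
        _ = Real.sqrt (N (p+1)) * (Real.sqrt (R (p+1) / N (p+1)) *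
            lmax (unf A x ⟨p+1, hjlt⟩)) := by ring
        _ ≤ Real.sqrt (N (p+1)) *
            enorm' ((unf A x (⟨p+1, hjlt⟩ : Fin d)).transpose.mulVec (x ⟨p+1, hjlt⟩)) := by
            apply mul_le_mul_of_nonneg_left _ hb.le
            have eR' : R (p+1) = (r (⟨p+1, hjlt⟩ : Fin d) : ℝ) := by
              rw [hR]; dsimp only; rw [dif_pos hjlt]
            rw [eR', eN]
            exact h1
        _ = enorm' ((unf A x (⟨p+1, hjlt⟩ : Fin d)).transpose.mulVec (x ⟨p+1, hjlt⟩)) *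
            Real.sqrt (N (p+1)) := mul_comm _ _
  -- final step: from position d-2 to the value of the algorithm
  have hh : d - 2 < d := by omega
  have C := claim (d-2) le_rfl
  have hj'v : (last : ℕ) = ((⟨d-2, hh⟩ : Fin d) : ℕ) + 1 := by
    simp only [Fin.val_mk, hlast]; omega
  have hltpre : (⟨d-2, hh⟩ : Fin d) < last := Fin.lt_iff_val_lt_val.2 (by
    simp only [Fin.val_mk, hlast]; omega)
  have hE := enorm_last A x ⟨d-2, hh⟩ last hj'v hlast hltpre
  rw [hE] at C
  obtain ⟨hm1, hm2⟩ := S3 A x t r last (hr last).1 htrl hxl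
  -- bookkeeping for the products
  have hPr : (∏ j, (r j:ℝ)) = ∏ k ∈ Finset.range d, R k := by
    rw [← Fin.prod_univ_eq_prod_range]
    apply Finset.prod_congr rfl
    intro j _
    rw [hR]; dsimp only; rw [dif_pos j.2]
  have hPn : (∏ j, (n j:ℝ)) = ∏ k ∈ Finset.range d, N k := by
    rw [← Fin.prod_univ_eq_prod_range]
    apply Finset.prod_congr rfl
    intro j _
    rw [hN]; dsimp only; rw [dif_pos j.2]
  have hfl : last ≠ first := by
    intro h; rw [h, hfirst] at hlast; omega
  have eN0 : N 0 = (n first : ℝ) := by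
    rw [hN]; dsimp only; rw [dif_pos hd0]
    have : (⟨0, hd0⟩ : Fin d) = first := Fin.ext (by simp [hfirst])
    rw [this]
  have hd1 : 0 < d - 1 := by omega
  have eNl : N (d-1) = (n last : ℝ) := by
    rw [hN]; dsimp only; rw [dif_pos (by omega : d - 1 < d)]
    have : (⟨d-1, by omega⟩ : Fin d) = last := Fin.ext (by simp [hlast])
    rw [this]
  have eRl : R (d-1) = (r last : ℝ) := by
    rw [hR]; dsimp only; rw [dif_pos (by omega : d - 1 < d)]
    have : (⟨d-1, by omega⟩ : Fin d) = last := Fin.ext (by simp [hlast])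
    rw [this]
  have hPee : (∏ j ∈ (Finset.univ.erase first).erase last, (n j:ℝ))
      = ∏ k ∈ Finset.Ico 1 (d-1), N k := by
    have h1 : (∏ j, (n j:ℝ)) = (n first:ℝ) * ∏ j ∈ Finset.univ.erase first, (n j:ℝ) :=
      (Finset.mul_prod_erase Finset.univ _ (Finset.mem_univ first)).symm
    have h2 : ∏ j ∈ Finset.univ.erase first, (n j:ℝ)
        = (n last:ℝ) * ∏ j ∈ (Finset.univ.erase first).erase last, (n j:ℝ) :=
      (Finset.mul_prod_erase _ _ (Finset.mem_erase.2 ⟨hfl, Finset.mem_univ last⟩)).symm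
    have h3 : ∏ k ∈ Finset.range d, N k = (∏ k ∈ Finset.range (d-1), N k) * N (d-1) :=
      prod_range_split N d hd0
    have h4 : ∏ k ∈ Finset.range (d-1), N k = N 0 * ∏ k ∈ Finset.Ico 1 (d-1), N k :=
      prod_range_split_bot N (d-1) hd1
    have heq : (n first:ℝ) * ((n last:ℝ) * ∏ j ∈ (Finset.univ.erase first).erase last, (n j:ℝ))
        = (n first:ℝ) * ((n last:ℝ) * ∏ k ∈ Finset.Ico 1 (d-1), N k) := by
      rw [← h2, ← h1, hPn, h3, h4, eN0, eNl]; ring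
    have hnf : (n first:ℝ) ≠ 0 := by
      have := hn1 first; positivity
    have hnl : (n last:ℝ) ≠ 0 := by
      have := hn1 last; positivity
    exact mul_left_cancel₀ hnl (mul_left_cancel₀ hnf heq)
  -- rewrite C's index arithmetic
  rw [show d - 2 + 1 = d - 1 from by omega] at C
  -- the main lower bound
  have hprodRN1 : (0:ℝ) < ∏ k ∈ Finset.range (d-1), (R k / N k) :=
    Finset.prod_pos fun k _ => div_pos (hRpos k) (hNpos k)
  have hprodN1 : (0:ℝ) < ∏ k ∈ Finset.Ico 1 (d-1), N k :=
    Finset.prod_pos fun k _ => hNpos k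
  have hsplit : (∏ k ∈ Finset.range d, R k) / (∏ k ∈ Finset.range d, N k)
      = ((r last : ℝ) / (n last : ℝ)) * ∏ k ∈ Finset.range (d-1), (R k / N k) := by
    rw [prod_range_split R d hd0, prod_range_split N d hd0, Finset.prod_div_distrib,
      eRl, eNl]
    have hq : (0:ℝ) < ∏ k ∈ Finset.range (d-1), N k := Finset.prod_pos fun k _ => hNpos k
    field_simp
  have part1 : Real.sqrt ((∏ j, (r j : ℝ)) / ∏ j, (n j : ℝ)) *
      (lmax (unf A x first) /
        Real.sqrt (∏ j ∈ (Finset.univ.erase first).erase last, (n j : ℝ)))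
      ≤ mlin A x := by
    rw [hPr, hPn, hPee, hsplit, Real.sqrt_mul (by positivity)]
    have step1 : Real.sqrt ((r last : ℝ) / (n last : ℝ)) *
        (Real.sqrt (∏ k ∈ Finset.range (d-1), (R k / N k)) /
          Real.sqrt (∏ k ∈ Finset.Ico 1 (d-1), N k) * lmax (unf A x first))
        ≤ Real.sqrt ((r last : ℝ) / (n last : ℝ)) * enorm' (cvec A x last) :=
      mul_le_mul_of_nonneg_left C (Real.sqrt_nonneg _)
    calc Real.sqrt ((r last : ℝ) / (n last : ℝ)) *
          Real.sqrt (∏ k ∈ Finset.range (d-1), (R k / N k)) *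
          (lmax (unf A x first) / Real.sqrt (∏ k ∈ Finset.Ico 1 (d-1), N k))
        = Real.sqrt ((r last : ℝ) / (n last : ℝ)) *
          (Real.sqrt (∏ k ∈ Finset.range (d-1), (R k / N k)) /
            Real.sqrt (∏ k ∈ Finset.Ico 1 (d-1), N k) * lmax (unf A x first)) := by
          ring
      _ ≤ Real.sqrt ((r last : ℝ) / (n last : ℝ)) * enorm' (cvec A x last) := step1
      _ ≤ enorm' (t last) := hm2
      _ = mlin A x := hm1.symm
  refine ⟨part1, ?_⟩
  intro y hy
  have hopt := opt_le A x first hfirst hn1 y (fun j => (hy j).1)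
  have hP2 : (0:ℝ) < Real.sqrt (∏ j ∈ (Finset.univ.erase first).erase last, (n j : ℝ)) := by
    apply Real.sqrt_pos.2
    apply Finset.prod_pos
    intro j _
    have := hn1 j
    positivity
  calc Real.sqrt ((∏ j, (r j : ℝ)) / ∏ j, (n j : ℝ)) *
        (mlin A y / Real.sqrt (∏ j ∈ (Finset.univ.erase first).erase last, (n j : ℝ)))
      ≤ Real.sqrt ((∏ j, (r j : ℝ)) / ∏ j, (n j : ℝ)) *
        (lmax (unf A x first) /
          Real.sqrt (∏ j ∈ (Finset.univ.erase first).erase last, (n j : ℝ))) := by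
        apply mul_le_mul_of_nonneg_left _ (Real.sqrt_nonneg _)
        exact (div_le_div_iff_of_pos_right hP2).2 hopt
    _ ≤ mlin A x := part1
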